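/- Let x ∈ {0,1}^n and let y be obtained from x by standard bit mutation (each bit flipped independently with probability 1/n). Let m' = m/2 and suppose x has, in each of the m' blocks of length n' = 2n/m, a well-defined first zero from the left at position ℓ_i and last one from the right at position r_i (when they exist). If y is a Pareto-optimal point of m-objective LOTZ with f(y) ≠ f(x), then at least one of the at most 2m' bits at positions {ℓ_1, r_1, ..., ℓ_{m'}, r_{m'}} was flipped; consequently the probability that y is Pareto-optimal with objective value different from x is at most m/n. -/

import Mathlib

/-- Bit of `x` at (0-indexed) position `i`, `false` if out of range. -/
def bitAt (n : ℕ) (x : Fin n → Bool) (i : ℕ) : Bool :=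
  if h : i < n then x ⟨i, h⟩ else false

/-- Number of leading ones of the substring of `x` of length `len` starting at `start`. -/
def leadOnes (n : ℕ) (x : Fin n → Bool) (start len : ℕ) : ℕ :=
  ((Finset.range len).filter (fun i => ∀ j ≤ i, bitAt n x (start + j) = true)).card

/-- Number of trailing zeros of the substring of `x` of length `len` starting at `start`. -/
def trailZeros (n : ℕ) (x : Fin n → Bool) (start len : ℕ) : ℕ :=
  ((Finset.range len).filter
    (fun i => ∀ j, i ≤ j → j < len → bitAt n x (start + j) = false)).card

/-- The `m`-objective LOTZ function on bit strings of length `n` (objectives `0`-indexed):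
even `k` counts the leading ones of block `k/2`, odd `k` the trailing zeros of that block,
where blocks are consecutive substrings of length `n' = 2n/m`. -/
def mLOTZ (m n : ℕ) (x : Fin n → Bool) (k : Fin m) : ℕ :=
  if k.val % 2 = 0 then leadOnes n x ((k.val / 2) * (2 * n / m)) (2 * n / m)
  else trailZeros n x ((k.val / 2) * (2 * n / m)) (2 * n / m)

/-- `u` strictly dominates `v`. -/
def StrictDom {m : ℕ} (u v : Fin m → ℕ) : Prop :=
  (∀ i, v i ≤ u i) ∧ ∃ i, v i < u i

/-- `x` is Pareto-optimal for `mLOTZ m n`. -/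
def ParetoOpt (m n : ℕ) (x : Fin n → Bool) : Prop :=
  ∀ y : Fin n → Bool, ¬ StrictDom (mLOTZ m n y) (mLOTZ m n x)

/-- Position `i` is the first zero (from the left) of its block of length `n' = 2n/m`. -/
def FirstZero (m n : ℕ) (x : Fin n → Bool) (i : Fin n) : Prop :=
  x i = false ∧ ∀ j : Fin n, (j : ℕ) / (2 * n / m) = (i : ℕ) / (2 * n / m) →
    (j : ℕ) < (i : ℕ) → x j = true

/-- Position `i` is the last one (from the right) of its block of length `n' = 2n/m`. -/
def LastOne (m n : ℕ) (x : Fin n → Bool) (i : Fin n) : Prop :=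
  x i = true ∧ ∀ j : Fin n, (j : ℕ) / (2 * n / m) = (i : ℕ) / (2 * n / m) →
    (i : ℕ) < (j : ℕ) → x j = false

lemma leadOnes_le_len (n : ℕ) (x : Fin n → Bool) (s len : ℕ) : leadOnes n x s len ≤ len :=
  le_trans (Finset.card_filter_le _ _) (by simp)

lemma trailZeros_le_len (n : ℕ) (x : Fin n → Bool) (s len : ℕ) : trailZeros n x s len ≤ len :=
  le_trans (Finset.card_filter_le _ _) (by simp)

lemma leadOnes_le_of_false {n : ℕ} {x : Fin n → Bool} {s len t : ℕ}
    (ht : bitAt n x (s + t) = false) : leadOnes n x s len ≤ t := by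
  unfold leadOnes
  refine le_trans (Finset.card_le_card ?_) (le_of_eq (Finset.card_range t))
  intro i hi
  simp only [Finset.mem_filter, Finset.mem_range] at hi ⊢
  by_contra hti
  push_neg at hti
  have h := hi.2 t hti
  rw [ht] at h
  exact Bool.false_ne_true h

lemma leadOnes_ge {n : ℕ} {x : Fin n → Bool} {s len t : ℕ} (h : t ≤ len)
    (hall : ∀ j, j < t → bitAt n x (s + j) = true) : t ≤ leadOnes n x s len := by
  unfold leadOnes
  refine le_trans (le_of_eq (Finset.card_range t).symm) (Finset.card_le_card ?_)
  intro i hi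
  simp only [Finset.mem_range] at hi
  simp only [Finset.mem_filter, Finset.mem_range]
  exact ⟨lt_of_lt_of_le hi h, fun j hj => hall j (lt_of_le_of_lt hj hi)⟩

lemma trailZeros_le_of_true {n : ℕ} {x : Fin n → Bool} {s len t : ℕ} (htn : t < len)
    (ht : bitAt n x (s + t) = true) : trailZeros n x s len ≤ len - (t + 1) := by
  unfold trailZeros
  refine le_trans (Finset.card_le_card ?_) (le_of_eq (Nat.card_Ico (t+1) len))
  intro i hi
  simp only [Finset.mem_filter, Finset.mem_range] at hi
  simp only [Finset.mem_Ico]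
  refine ⟨?_, hi.1⟩
  by_contra hti
  push_neg at hti
  have h := hi.2 t (by omega) htn
  rw [ht] at h
  simp at h

lemma trailZeros_ge {n : ℕ} {x : Fin n → Bool} {s len a : ℕ}
    (hall : ∀ j, a ≤ j → j < len → bitAt n x (s + j) = false) :
    len - a ≤ trailZeros n x s len := by
  unfold trailZeros
  refine le_trans (le_of_eq (Nat.card_Ico a len).symm) (Finset.card_le_card ?_)
  intro i hi
  simp only [Finset.mem_Ico] at hi
  simp only [Finset.mem_filter, Finset.mem_range]
  exact ⟨hi.2, fun j hj1 hj2 => hall j (le_trans hi.1 hj1) hj2⟩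

open Classical in
lemma lotz_key (m n : ℕ) (hm : Even m) (hm4 : 4 ≤ m) (hdvd : m / 2 ∣ n) (hn : 0 < n)
    (x ω : Fin n → Bool)
    (hflip : ∀ i : Fin n, (FirstZero m n x i ∨ LastOne m n x i) → ω i = false) :
    ∀ k : Fin m, mLOTZ m n (fun i => xor (x i) (ω i)) k ≤ mLOTZ m n x k := by
  obtain ⟨m2, hm2⟩ := hm
  have hm2' : m = 2 * m2 := by omega
  have hm2pos : 0 < m2 := by omega
  have hn' : 2 * n / m = n / m2 := by
    rw [hm2']; exact Nat.mul_div_mul_left n m2 (by norm_num)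
  have hdvd' : m2 ∣ n := by
    have : m / 2 = m2 := by omega
    rwa [this] at hdvd
  set n' := n / m2 with hn'def
  have hnn : m2 * n' = n := Nat.mul_div_cancel' hdvd'
  have hn'pos : 0 < n' := Nat.div_pos (Nat.le_of_dvd hn hdvd') hm2pos
  intro k
  unfold mLOTZ
  rw [hn']
  set b := k.val / 2 with hbdef
  have hb : b < m2 := by
    have := k.isLt
    omega
  have hsj : ∀ j : ℕ, j < n' → b * n' + j < n := by
    intro j hj
    have h1 : b * n' + j < (b + 1) * n' := by ring_nf; omega
    have h2 : (b + 1) * n' ≤ m2 * n' := Nat.mul_le_mul_right _ (by omega)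
    omega
  have hblock : ∀ j : ℕ, j < n' → (b * n' + j) / n' = b := by
    intro j hj
    rw [mul_comm, Nat.mul_add_div hn'pos, Nat.div_eq_of_lt hj, add_zero]
  by_cases hk : k.val % 2 = 0
  · rw [if_pos hk, if_pos hk]
    by_cases hall : ∀ j, j < n' → bitAt n x (b * n' + j) = true
    · have h1 := leadOnes_le_len n (fun i => xor (x i) (ω i)) (b * n') n'
      have h2 := leadOnes_ge (le_refl n') hall
      omega
    · push_neg at hall
      have hex : ∃ j, j < n' ∧ bitAt n x (b * n' + j) = false := by
        obtain ⟨j, hj, hjf⟩ := hall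
        exact ⟨j, hj, by simpa using hjf⟩
      set t := Nat.find hex with htdef
      obtain ⟨htn, htf⟩ := Nat.find_spec hex
      have hmin : ∀ j, j < t → bitAt n x (b * n' + j) = true := by
        intro j hj
        have h := Nat.find_min hex hj
        push_neg at h
        have h2 := h (lt_trans hj htn)
        simpa using h2
      have hi : b * n' + t < n := hsj t htn
      set i : Fin n := ⟨b * n' + t, hi⟩ with hidef
      have hxi : x i = false := by
        have h : bitAt n x (b * n' + t) = x i := by simp [bitAt, hi, hidef]
        rw [← h]; exact htf
      have hFZ : FirstZero m n x i := by
        refine ⟨hxi, ?_⟩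
        intro j hjb hji
        rw [hn'] at hjb
        have hib : (i : ℕ) / n' = b := hblock t htn
        rw [hib] at hjb
        have hjlo : b * n' ≤ (j : ℕ) := by
          have h := Nat.div_mul_le_self (j : ℕ) n'
          rw [hjb] at h; exact h
        have hji' : (j : ℕ) < b * n' + t := hji
        have hjt : (j : ℕ) - b * n' < t := by omega
        have h := hmin _ hjt
        have hjeq : b * n' + ((j : ℕ) - b * n') = (j : ℕ) := by omega
        rw [hjeq] at h
        simpa [bitAt, j.isLt] using h
      have hωi : ω i = false := hflip i (Or.inl hFZ)
      have hyi : bitAt n (fun i => xor (x i) (ω i)) (b * n' + t) = false := by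
        simp only [bitAt, dif_pos hi]
        show xor (x i) (ω i) = false
        rw [hxi, hωi]; rfl
      have h1 := leadOnes_le_of_false (len := n') hyi
      have h2 := leadOnes_ge (le_of_lt htn) hmin
      omega
  · rw [if_neg hk, if_neg hk]
    by_cases hall : ∀ j, j < n' → bitAt n x (b * n' + j) = false
    · have h1 := trailZeros_le_len n (fun i => xor (x i) (ω i)) (b * n') n'
      have h2 := trailZeros_ge (a := 0) (fun j _ hj => hall j hj)
      omega
    · push_neg at hall
      have hex : ∃ j, j < n' ∧ bitAt n x (b * n' + j) = true := by
        obtain ⟨j, hj, hjf⟩ := hall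
        exact ⟨j, hj, by simpa using hjf⟩
      obtain ⟨j0, hj0, hj0t⟩ := hex
      set P : ℕ → Prop := fun j => bitAt n x (b * n' + j) = true with hPdef
      set t := Nat.findGreatest P (n' - 1) with htdef
      have htP : P t := Nat.findGreatest_spec (m := j0) (by omega) hj0t
      have htle : t ≤ n' - 1 := Nat.findGreatest_le _
      have htn : t < n' := by omega
      have hmax : ∀ j, t < j → j < n' → bitAt n x (b * n' + j) = false := by
        intro j h1 h2
        by_cases hje : j ≤ n' - 1
        · have h := Nat.findGreatest_is_greatest (P := P) h1 hje
          simpa [hPdef] using h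
        · omega
      have hi : b * n' + t < n := hsj t htn
      set i : Fin n := ⟨b * n' + t, hi⟩ with hidef
      have hxi : x i = true := by
        have h : bitAt n x (b * n' + t) = x i := by simp [bitAt, hi, hidef]
        rw [← h]; exact htP
      have hLO : LastOne m n x i := by
        refine ⟨hxi, ?_⟩
        intro j hjb hji
        rw [hn'] at hjb
        have hib : (i : ℕ) / n' = b := hblock t htn
        rw [hib] at hjb
        have hjlo : b * n' ≤ (j : ℕ) := by
          have h := Nat.div_mul_le_self (j : ℕ) n'
          rw [hjb] at h; exact h
        have hjhi : (j : ℕ) < (b + 1) * n' := by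
          rw [← Nat.div_lt_iff_lt_mul hn'pos, hjb]; omega
        have hji' : b * n' + t < (j : ℕ) := hji
        have h := hmax ((j : ℕ) - b * n') (by omega) (by ring_nf at hjhi; omega)
        have hjeq : b * n' + ((j : ℕ) - b * n') = (j : ℕ) := by omega
        rw [hjeq] at h
        simpa [bitAt, j.isLt] using h
      have hωi : ω i = false := hflip i (Or.inr hLO)
      have hyi : bitAt n (fun i => xor (x i) (ω i)) (b * n' + t) = true := by
        simp only [bitAt, dif_pos hi]
        show xor (x i) (ω i) = true
        rw [hxi, hωi]; rfl
      have h1 := trailZeros_le_of_true htn hyi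
      have h2 := trailZeros_ge (a := t + 1) (fun j hj1 hj2 => hmax j (by omega) hj2)
      omega

lemma fz_uniq {m n : ℕ} {x : Fin n → Bool} {i j : Fin n} (hi : FirstZero m n x i)
    (hj : FirstZero m n x j) (hb : (i : ℕ) / (2 * n / m) = (j : ℕ) / (2 * n / m)) :
    i = j := by
  rcases lt_trichotomy (i : ℕ) (j : ℕ) with h | h | h
  · have h2 := hj.2 i hb h
    rw [hi.1] at h2; exact absurd h2 (by simp)
  · exact Fin.ext h
  · have h2 := hi.2 j hb.symm h
    rw [hj.1] at h2; exact absurd h2 (by simp)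

lemma lo_uniq {m n : ℕ} {x : Fin n → Bool} {i j : Fin n} (hi : LastOne m n x i)
    (hj : LastOne m n x j) (hb : (i : ℕ) / (2 * n / m) = (j : ℕ) / (2 * n / m)) :
    i = j := by
  rcases lt_trichotomy (i : ℕ) (j : ℕ) with h | h | h
  · have h2 := hi.2 j hb.symm h
    rw [hj.1] at h2; exact absurd h2 (by simp)
  · exact Fin.ext h
  · have h2 := hj.2 i hb h
    rw [hi.1] at h2; exact absurd h2 (by simp)

open Classical in
lemma cardS_le (m n : ℕ) (hm : Even m) (hm4 : 4 ≤ m) (hdvd : m / 2 ∣ n) (hn : 0 < n)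
    (x : Fin n → Bool) :
    (Finset.univ.filter (fun i : Fin n => FirstZero m n x i ∨ LastOne m n x i)).card ≤ m := by
  obtain ⟨m2, hm2⟩ := hm
  have hm2' : m = 2 * m2 := by omega
  have hm2pos : 0 < m2 := by omega
  have hn' : 2 * n / m = n / m2 := by
    rw [hm2']; exact Nat.mul_div_mul_left n m2 (by norm_num)
  have hdvd' : m2 ∣ n := by
    have h : m / 2 = m2 := by omega
    rwa [h] at hdvd
  have hnn : m2 * (n / m2) = n := Nat.mul_div_cancel' hdvd'
  have hn'pos : 0 < n / m2 := Nat.div_pos (Nat.le_of_dvd hn hdvd') hm2pos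
  have hcard : ((Finset.range m2) ×ˢ (Finset.univ : Finset Bool)).card = m := by
    rw [Finset.card_product, Finset.card_range, Finset.card_univ, Fintype.card_bool]; omega
  refine le_trans (Finset.card_le_card_of_injOn
    (fun i => ((i : ℕ) / (2 * n / m), if FirstZero m n x i then true else false)) ?_ ?_)
    (le_of_eq hcard)
  · intro i hi
    simp only [Finset.mem_coe, Finset.mem_product, Finset.mem_range, Finset.mem_univ, and_true]
    rw [hn']
    rw [Nat.div_lt_iff_lt_mul hn'pos]
    have := i.isLt
    omega
  · intro i hi j hj hij
    simp only [Finset.coe_filter, Set.mem_setOf_eq, Finset.mem_univ, true_and] at hi hj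
    have hb : (i : ℕ) / (2 * n / m) = (j : ℕ) / (2 * n / m) := congrArg Prod.fst hij
    have h2 := congrArg Prod.snd hij
    simp only at h2
    by_cases hFi : FirstZero m n x i <;> by_cases hFj : FirstZero m n x j
    · exact fz_uniq hFi hFj hb
    · rw [if_pos hFi, if_neg hFj] at h2; exact absurd h2 (by simp)
    · rw [if_neg hFi, if_pos hFj] at h2; exact absurd h2 (by simp)
    · have hLi : LastOne m n x i := hi.resolve_left hFi
      have hLj : LastOne m n x j := hj.resolve_left hFj
      exact lo_uniq hLi hLj hb
open Classical in
/-- if standard bit mutation (flip pattern `ω`, each bit flipped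
independently with probability `1/n`) turns `x` into a Pareto-optimal point of
`m`-objective LOTZ with a different objective value, then some flipped position is a
first zero or last one of its block; consequently the probability of this event is at
most `m/n`. -/
theorem stmt7 (m n : ℕ) (hm : Even m) (hm4 : 4 ≤ m) (hdvd : m / 2 ∣ n) (hn : 0 < n)
    (x : Fin n → Bool) :
    (∀ ω : Fin n → Bool,
        (ParetoOpt m n (fun i => xor (x i) (ω i)) ∧
          mLOTZ m n (fun i => xor (x i) (ω i)) ≠ mLOTZ m n x) →
        ∃ i : Fin n, ω i = true ∧ (FirstZero m n x i ∨ LastOne m n x i))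
    ∧ (∑ ω : Fin n → Bool,
          (if ParetoOpt m n (fun i => xor (x i) (ω i)) ∧
                mLOTZ m n (fun i => xor (x i) (ω i)) ≠ mLOTZ m n x
            then ∏ i : Fin n, (if ω i = true then (1 : ℝ) / n else 1 - 1 / n)
            else 0))
        ≤ (m : ℝ) / n := by

  have hnR : (0 : ℝ) < n := by exact_mod_cast hn
  have hp0 : (0 : ℝ) ≤ 1 / n := by positivity
  have hp1 : (0 : ℝ) ≤ 1 - 1 / n := by
    rw [sub_nonneg]
    rw [div_le_one hnR]
    exact_mod_cast hn
  have part1 : ∀ ω : Fin n → Bool,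
      (ParetoOpt m n (fun i => xor (x i) (ω i)) ∧
        mLOTZ m n (fun i => xor (x i) (ω i)) ≠ mLOTZ m n x) →
      ∃ i : Fin n, ω i = true ∧ (FirstZero m n x i ∨ LastOne m n x i) := by
    intro ω ⟨hpo, hne⟩
    by_contra hno
    push_neg at hno
    have hflip : ∀ i : Fin n, (FirstZero m n x i ∨ LastOne m n x i) → ω i = false := by
      intro i h
      cases hω : ω i with
      | false => rfl
      | true =>
          rcases h with h | h
          exacts [absurd h (hno i hω).1, absurd h (hno i hω).2]
    have hle := lotz_key m n hm hm4 hdvd hn x ω hflip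
    have hex : ∃ k, mLOTZ m n (fun i => xor (x i) (ω i)) k < mLOTZ m n x k := by
      by_contra hq
      push_neg at hq
      exact hne (funext fun k => le_antisymm (hle k) (hq k))
    exact hpo x ⟨hle, hex⟩
  refine ⟨part1, ?_⟩
  set S := Finset.univ.filter (fun i : Fin n => FirstZero m n x i ∨ LastOne m n x i) with hS
  have hScard : S.card ≤ m := cardS_le m n hm hm4 hdvd hn x
  have hprod_nonneg : ∀ ω : Fin n → Bool,
      (0 : ℝ) ≤ ∏ i : Fin n, (if ω i = true then (1 : ℝ) / n else 1 - 1 / n) := by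
    intro ω
    refine Finset.prod_nonneg fun i _ => ?_
    by_cases h : ω i = true
    · rw [if_pos h]; exact hp0
    · rw [if_neg h]; exact hp1
  have hterm_nonneg : ∀ (ω : Fin n → Bool) (i0 : Fin n),
      (0 : ℝ) ≤ (if ω i0 = true then ∏ i : Fin n, (if ω i = true then (1 : ℝ) / n else 1 - 1 / n) else 0) := by
    intro ω i0
    by_cases h : ω i0 = true
    · rw [if_pos h]; exact hprod_nonneg ω
    · rw [if_neg h]
  have hsum_i : ∀ i0 : Fin n,
      (∑ ω : Fin n → Bool, (if ω i0 = true then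
          ∏ i : Fin n, (if ω i = true then (1 : ℝ) / n else 1 - 1 / n) else 0)) = 1 / n := by
    intro i0
    have hrw : ∀ ω : Fin n → Bool,
        (if ω i0 = true then ∏ i : Fin n, (if ω i = true then (1 : ℝ) / n else 1 - 1 / n) else 0)
        = ∏ i : Fin n, (if i = i0 then (if ω i = true then (1 : ℝ) / n else 0)
            else (if ω i = true then 1 / n else 1 - 1 / n)) := by
      intro ω
      by_cases h : ω i0 = true
      · rw [if_pos h]
        refine Finset.prod_congr rfl fun j _ => ?_
        by_cases hj : j = i0
        · subst hj; rw [if_pos rfl, if_pos h, if_pos h]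
        · rw [if_neg hj]
      · rw [if_neg h]
        symm
        refine Finset.prod_eq_zero (Finset.mem_univ i0) ?_
        rw [if_pos rfl, if_neg h]
    have huniv : (Finset.univ : Finset (Fin n → Bool))
        = Fintype.piFinset (fun _ : Fin n => (Finset.univ : Finset Bool)) :=
      (Fintype.piFinset_univ).symm
    have hmain : (∑ ω : Fin n → Bool, ∏ i : Fin n,
          (if i = i0 then (if ω i = true then (1 : ℝ) / n else 0)
            else (if ω i = true then 1 / n else 1 - 1 / n)))
        = ∏ i : Fin n, ∑ b : Bool,
          (if i = i0 then (if b = true then (1 : ℝ) / n else 0)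
            else (if b = true then 1 / n else 1 - 1 / n)) := by
      rw [huniv]
      exact Finset.sum_prod_piFinset (Finset.univ : Finset Bool)
        (fun i b => if i = i0 then (if b = true then (1 : ℝ) / n else 0)
          else (if b = true then 1 / n else 1 - 1 / n))
    rw [Finset.sum_congr rfl fun ω _ => hrw ω, hmain]
    have hfac : ∀ j : Fin n,
        (∑ b : Bool, (if j = i0 then (if b = true then (1 : ℝ) / n else 0)
            else (if b = true then 1 / n else 1 - 1 / n))) = if j = i0 then (1 : ℝ) / (n : ℝ) else 1 := by
      intro j
      by_cases hj : j = i0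
      · simp [hj]
      · simp [hj]
    rw [Finset.prod_congr rfl fun j _ => hfac j]
    simp
  have hpt : ∀ ω : Fin n → Bool,
      (if ParetoOpt m n (fun i => xor (x i) (ω i)) ∧
            mLOTZ m n (fun i => xor (x i) (ω i)) ≠ mLOTZ m n x
        then ∏ i : Fin n, (if ω i = true then (1 : ℝ) / n else 1 - 1 / n)
        else 0)
      ≤ ∑ i0 ∈ S, (if ω i0 = true then
          ∏ i : Fin n, (if ω i = true then (1 : ℝ) / n else 1 - 1 / n) else 0) := by
    intro ω
    by_cases hE : ParetoOpt m n (fun i => xor (x i) (ω i)) ∧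
        mLOTZ m n (fun i => xor (x i) (ω i)) ≠ mLOTZ m n x
    · rw [if_pos hE]
      obtain ⟨i0, hω0, hP0⟩ := part1 ω hE
      have hi0S : i0 ∈ S := Finset.mem_filter.2 ⟨Finset.mem_univ _, hP0⟩
      calc (∏ i : Fin n, (if ω i = true then (1 : ℝ) / n else 1 - 1 / n))
          = (if ω i0 = true then
              ∏ i : Fin n, (if ω i = true then (1 : ℝ) / n else 1 - 1 / n) else 0) := by
            rw [if_pos hω0]
        _ ≤ _ := Finset.single_le_sum (fun i _ => hterm_nonneg ω i) hi0S
    · rw [if_neg hE]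
      exact Finset.sum_nonneg fun i _ => hterm_nonneg ω i
  calc (∑ ω : Fin n → Bool,
          (if ParetoOpt m n (fun i => xor (x i) (ω i)) ∧
                mLOTZ m n (fun i => xor (x i) (ω i)) ≠ mLOTZ m n x
            then ∏ i : Fin n, (if ω i = true then (1 : ℝ) / n else 1 - 1 / n)
            else 0))
      ≤ ∑ ω : Fin n → Bool, ∑ i0 ∈ S, (if ω i0 = true then
          ∏ i : Fin n, (if ω i = true then (1 : ℝ) / n else 1 - 1 / n) else 0) :=
        Finset.sum_le_sum fun ω _ => hpt ω
    _ = ∑ i0 ∈ S, ∑ ω : Fin n → Bool, (if ω i0 = true then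
          ∏ i : Fin n, (if ω i = true then (1 : ℝ) / n else 1 - 1 / n) else 0) :=
        Finset.sum_comm
    _ = ∑ i0 ∈ S, (1 / n : ℝ) := Finset.sum_congr rfl fun i0 _ => hsum_i i0
    _ = S.card * (1 / n) := by rw [Finset.sum_const, nsmul_eq_mul]
    _ ≤ m * (1 / n) := by
        refine mul_le_mul_of_nonneg_right ?_ hp0
        exact_mod_cast hScard
    _ = (m : ℝ) / n := by ring
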